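/- Let m ≥ 1, let A be a symmetric positive definite m×m real matrix, and let f : ℝ^m → ℝ ∪ {+∞} be proper, convex, and lower semicontinuous, with Legendre–Fenchel conjugate f*(p) = sup_{w ∈ ℝ^m} ( ⟨p, w⟩ − f(w) ). Then for every v ∈ ℝ^m the problems min_w { (1/2) (w − v)ᵀ A (w − v) + f(w) } and min_w { (1/2) (w − A v)ᵀ A^{−1} (w − A v) + f*(w) } each possess a unique minimizer, denoted p and q respectively, and these satisfy the generalized Moreau identity v = p + A^{−1} q. -/

import Mathlib

open Matrix

/-- Legendre–Fenchel conjugate of an extended-real-valued function on `ℝ^m`. -/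
noncomputable def fenchelConj {m : ℕ} (f : (Fin m → ℝ) → EReal) (p : Fin m → ℝ) : EReal :=
  ⨆ w : Fin m → ℝ, (((p ⬝ᵥ w : ℝ) : EReal) - f w)


variable {m : ℕ}

lemma symm_dot {A : Matrix (Fin m) (Fin m) ℝ} (hA : A.IsHermitian) (x y : Fin m → ℝ) :
    x ⬝ᵥ A.mulVec y = y ⬝ᵥ A.mulVec x := by
  rw [Matrix.dotProduct_mulVec, ← Matrix.mulVec_transpose]
  rw [show Aᵀ = A from by simpa [Matrix.conjTranspose_eq_transpose_of_trivial] using hA.eq]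
  exact dotProduct_comm _ _

lemma quad_expand {A : Matrix (Fin m) (Fin m) ℝ} (hA : A.IsHermitian) (x y : Fin m → ℝ) :
    (x + y) ⬝ᵥ A.mulVec (x + y)
      = x ⬝ᵥ A.mulVec x + 2 * (x ⬝ᵥ A.mulVec y) + y ⬝ᵥ A.mulVec y := by
  rw [Matrix.mulVec_add, dotProduct_add, add_dotProduct, add_dotProduct,
    symm_dot hA y x]
  ring

lemma quad_cont (A : Matrix (Fin m) (Fin m) ℝ) :
    Continuous fun x : Fin m → ℝ => x ⬝ᵥ A.mulVec x := by
  simp only [dotProduct, Matrix.mulVec]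
  exact continuous_finset_sum _ fun i _ => (continuous_apply i).mul
    (continuous_finset_sum _ fun j _ => continuous_const.mul (continuous_apply j))

variable {m : ℕ}

lemma quad_pos {A : Matrix (Fin m) (Fin m) ℝ} (hA : A.PosDef) {x : Fin m → ℝ} (hx : x ≠ 0) :
    0 < x ⬝ᵥ A.mulVec x := by
  have := hA.dotProduct_mulVec_pos hx
  simpa using this

lemma quad_nonneg {A : Matrix (Fin m) (Fin m) ℝ} (hA : A.PosDef) (x : Fin m → ℝ) :
    0 ≤ x ⬝ᵥ A.mulVec x := by
  rcases eq_or_ne x 0 with rfl | hx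
  · simp
  · exact (quad_pos hA hx).le

lemma quad_smul (A : Matrix (Fin m) (Fin m) ℝ) (c : ℝ) (x : Fin m → ℝ) :
    (c • x) ⬝ᵥ A.mulVec (c • x) = c^2 * (x ⬝ᵥ A.mulVec x) := by
  rw [Matrix.mulVec_smul, smul_dotProduct, dotProduct_smul]
  simp [smul_eq_mul]; ring

lemma quad_lower_bound (hm : 1 ≤ m) {A : Matrix (Fin m) (Fin m) ℝ} (hA : A.PosDef) :
    ∃ μ : ℝ, 0 < μ ∧ ∀ x : Fin m → ℝ, μ * ‖x‖^2 ≤ x ⬝ᵥ A.mulVec x := by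
  haveI : Nonempty (Fin m) := ⟨⟨0, hm⟩⟩
  have hsne : (Metric.sphere (0 : Fin m → ℝ) 1).Nonempty :=
    NormedSpace.sphere_nonempty.mpr zero_le_one
  obtain ⟨u, huS, hu⟩ := (isCompact_sphere (0 : Fin m → ℝ) 1).exists_isMinOn hsne
    ((quad_cont A).continuousOn : ContinuousOn (fun x : Fin m → ℝ => x ⬝ᵥ A.mulVec x) _)
  have hunorm : ‖u‖ = 1 := by simpa using huS
  have hune : u ≠ 0 := by intro h; rw [h] at hunorm; simp at hunorm
  refine ⟨u ⬝ᵥ A.mulVec u, quad_pos hA hune, fun x => ?_⟩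
  rcases eq_or_ne x 0 with rfl | hx
  · simp
  · have hxn : (0:ℝ) < ‖x‖ := norm_pos_iff.mpr hx
    have hmem : (‖x‖⁻¹ • x) ∈ Metric.sphere (0 : Fin m → ℝ) 1 := by
      simp [norm_smul, abs_of_pos (inv_pos.mpr hxn), inv_mul_cancel₀ hxn.ne']
    have h2 : u ⬝ᵥ A.mulVec u ≤ ‖x‖⁻¹^2 * (x ⬝ᵥ A.mulVec x) := by
      have := isMinOn_iff.mp hu _ hmem
      rwa [quad_smul] at this
    calc (u ⬝ᵥ A.mulVec u) * ‖x‖^2 ≤ (‖x‖⁻¹^2 * (x ⬝ᵥ A.mulVec x)) * ‖x‖^2 := by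
          nlinarith [sq_nonneg ‖x‖]
      _ = x ⬝ᵥ A.mulVec x := by field_simp

lemma lsc_min_on_compact {X : Type*} [TopologicalSpace X] [T2Space X] {s : Set X}
    (hs : IsCompact s) (hne : s.Nonempty) {g : X → EReal} (hg : LowerSemicontinuous g) :
    ∃ x ∈ s, ∀ y ∈ s, g x ≤ g y := by
  haveI : Nonempty s := hne.to_subtype
  set T : s → Set X := fun y => s ∩ g ⁻¹' Set.Iic (g y) with hT
  have hclosed : ∀ y : s, IsClosed (T y) := fun y =>
    hs.isClosed.inter (hg.isClosed_preimage (g y))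
  have hcomp : ∀ y : s, IsCompact (T y) := fun y => hs.inter_right (hg.isClosed_preimage _)
  have hnon : ∀ y : s, (T y).Nonempty := fun y => ⟨y, y.2, Set.mem_preimage.mpr (Set.mem_Iic.mpr le_rfl)⟩
  have hdir : Directed (· ⊇ ·) T := by
    intro a b
    rcases le_total (g a) (g b) with h | h
    · exact ⟨a, fun x hx => hx, fun x hx => ⟨hx.1, le_trans hx.2 h⟩⟩
    · exact ⟨b, fun x hx => ⟨hx.1, le_trans hx.2 h⟩, fun x hx => hx⟩
  obtain ⟨x, hx⟩ := IsCompact.nonempty_iInter_of_directed_nonempty_isCompact_isClosed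
    T hdir hnon hcomp hclosed
  simp only [Set.mem_iInter] at hx
  have hxs : x ∈ s := (hx ⟨hne.choose, hne.choose_spec⟩).1
  exact ⟨x, hxs, fun y hy => (hx ⟨y, hy⟩).2⟩

variable {m : ℕ}

-- dot product bound: |a ⬝ᵥ w| ≤ (∑ |a i|) * ‖w‖
lemma dot_le (a w : Fin m → ℝ) : |a ⬝ᵥ w| ≤ (∑ i, |a i|) * ‖w‖ := by
  calc |a ⬝ᵥ w| ≤ ∑ i, |a i * w i| := Finset.abs_sum_le_sum_abs _ _
    _ ≤ ∑ i, |a i| * ‖w‖ := by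
        refine Finset.sum_le_sum fun i _ => ?_
        rw [abs_mul]
        exact mul_le_mul_of_nonneg_left (by simpa using norm_le_pi_norm w i) (abs_nonneg _)
    _ = (∑ i, |a i|) * ‖w‖ := by rw [Finset.sum_mul]

lemma combo_eq (w₁ w₂ : Fin m → ℝ) (t : ℝ) :
    w₂ + t • (w₁ - w₂) = t • w₁ + (1 - t) • w₂ := by
  funext i
  simp [smul_eq_mul]
  ring

lemma exists_linear_lb {f : (Fin m → ℝ) → EReal}
    (hnbot : ∀ w, f w ≠ ⊥)
    (hconv : ∀ w₁ w₂ : Fin m → ℝ, ∀ t : ℝ, 0 ≤ t → t ≤ 1 →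
      f (t • w₁ + (1 - t) • w₂) ≤ (t : EReal) * f w₁ + ((1 - t : ℝ) : EReal) * f w₂)
    (hlsc : LowerSemicontinuous f) (w₀ : Fin m → ℝ) (r₀ : ℝ) (hw₀ : f w₀ = (r₀ : EReal)) :
    ∃ C M : ℝ, 0 ≤ M ∧ ∀ w, ((C - M * ‖w‖ : ℝ) : EReal) ≤ f w := by
  -- lower bound on the closed ball of radius 1 around w₀
  obtain ⟨x₀, hx₀mem, hx₀⟩ := lsc_min_on_compact (isCompact_closedBall w₀ 1)
    ⟨w₀, Metric.mem_closedBall_self zero_le_one⟩ hlsc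
  have hx₀top : f x₀ ≠ ⊤ := by
    intro h
    have := hx₀ w₀ (Metric.mem_closedBall_self zero_le_one)
    rw [h, hw₀, top_le_iff] at this
    exact EReal.coe_ne_top _ this
  set β : ℝ := (f x₀).toReal with hβ
  have hβeq : f x₀ = (β : EReal) := (EReal.coe_toReal hx₀top (hnbot x₀)).symm
  have hball : ∀ x ∈ Metric.closedBall w₀ 1, (β : EReal) ≤ f x := fun x hx => hβeq ▸ hx₀ x hx
  set M : ℝ := |β - r₀| with hM
  set C : ℝ := min β (r₀ - M * ‖w₀‖) with hC
  refine ⟨C, M, abs_nonneg _, fun w => ?_⟩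
  rcases eq_or_ne (f w) ⊤ with htop | hne
  · rw [htop]; exact le_top
  have hwreal : f w = ((f w).toReal : EReal) := (EReal.coe_toReal hne (hnbot w)).symm
  set c : ℝ := (f w).toReal with hc
  rw [hwreal, EReal.coe_le_coe_iff]
  set t : ℝ := ‖w - w₀‖ with ht
  have ht0 : 0 ≤ t := norm_nonneg _
  rcases le_or_gt t 1 with h1 | h1
  · -- w in the ball
    have : (β : EReal) ≤ f w := hball w (by simpa [Metric.mem_closedBall, dist_eq_norm] using h1)
    rw [hwreal, EReal.coe_le_coe_iff] at this
    have hMw : 0 ≤ M * ‖w‖ := mul_nonneg (abs_nonneg _) (norm_nonneg _)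
    calc C - M * ‖w‖ ≤ β - 0 := by
          have : C ≤ β := min_le_left _ _
          linarith
      _ ≤ c := by linarith
  · -- w far: use convexity
    have htpos : (0:ℝ) < t := lt_trans zero_lt_one h1
    have hti : 0 ≤ t⁻¹ := inv_nonneg.mpr htpos.le
    have hti1 : t⁻¹ ≤ 1 := by
      rw [inv_le_one_iff₀]; right; exact h1.le
    have hu : w₀ + t⁻¹ • (w - w₀) ∈ Metric.closedBall w₀ 1 := by
      simp only [Metric.mem_closedBall, dist_eq_norm]
      have : ‖w₀ + t⁻¹ • (w - w₀) - w₀‖ = t⁻¹ * t := by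
        rw [add_sub_cancel_left, norm_smul, Real.norm_eq_abs, abs_of_nonneg hti]
      rw [this, inv_mul_cancel₀ htpos.ne']
    have hcv := hconv w w₀ t⁻¹ hti hti1
    rw [← combo_eq w w₀ t⁻¹] at hcv
    have hle : (β : EReal) ≤ (t⁻¹ : EReal) * f w + ((1 - t⁻¹ : ℝ) : EReal) * f w₀ :=
      le_trans (hball _ hu) hcv
    rw [hwreal, hw₀] at hle
    have hle2 : β ≤ t⁻¹ * c + (1 - t⁻¹) * r₀ := by
      rw [show ((t : EReal))⁻¹ = ((t⁻¹ : ℝ) : EReal) from rfl, ← EReal.coe_mul, ← EReal.coe_mul,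
        ← EReal.coe_add, EReal.coe_le_coe_iff] at hle
      exact hle
    -- β ≤ t⁻¹ * c + (1 - t⁻¹) * r₀
    have hkey : r₀ + t * (β - r₀) ≤ c := by
      have h2 : t * β ≤ c + (t - 1) * r₀ := by
        have h3 := mul_le_mul_of_nonneg_left hle2 htpos.le
        have h4 : t * (t⁻¹ * c + (1 - t⁻¹) * r₀) = c + (t - 1) * r₀ := by
          field_simp
        linarith
      nlinarith
    have htw : t ≤ ‖w‖ + ‖w₀‖ := norm_sub_le _ _
    have hb : β - r₀ ≥ -M := neg_abs_le _
    have : r₀ - t * M ≤ c := by nlinarith [abs_nonneg (β - r₀)]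
    have hC2 : C ≤ r₀ - M * ‖w₀‖ := min_le_right _ _
    nlinarith [abs_nonneg (β - r₀), norm_nonneg w, norm_nonneg w₀]

lemma exists_min (hm : 1 ≤ m) {B : Matrix (Fin m) (Fin m) ℝ} (hB : B.PosDef)
    (u : Fin m → ℝ) {g : (Fin m → ℝ) → EReal} (hlsc : LowerSemicontinuous g)
    (w₀ : Fin m → ℝ) (r₀ : ℝ) (hw₀ : g w₀ = (r₀ : EReal))
    (C M : ℝ) (hM : 0 ≤ M) (hlb : ∀ w, ((C - M * ‖w‖ : ℝ) : EReal) ≤ g w) :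
    ∃ p, ∀ w : Fin m → ℝ,
      ((1 / 2 * ((p - u) ⬝ᵥ B.mulVec (p - u)) : ℝ) : EReal) + g p
        ≤ ((1 / 2 * ((w - u) ⬝ᵥ B.mulVec (w - u)) : ℝ) : EReal) + g w := by
  obtain ⟨μ, hμ, hquad⟩ := quad_lower_bound hm hB
  set q : (Fin m → ℝ) → ℝ := fun w => 1 / 2 * ((w - u) ⬝ᵥ B.mulVec (w - u)) with hq
  set Φ : (Fin m → ℝ) → EReal := fun w => ((q w : ℝ) : EReal) + g w with hΦ
  have hqcont : Continuous q :=
    continuous_const.mul ((quad_cont B).comp (continuous_id.sub continuous_const))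
  have hΦlsc : LowerSemicontinuous Φ := by
    refine LowerSemicontinuous.add' ?_ hlsc fun x => ?_
    · exact (continuous_coe_real_ereal.comp hqcont).lowerSemicontinuous
    · exact EReal.continuousAt_add (Or.inl (EReal.coe_ne_top _)) (Or.inl (EReal.coe_ne_bot _))
  set c₀ : ℝ := q w₀ + r₀ with hc₀
  have hΦw₀ : Φ w₀ = (c₀ : EReal) := by
    simp only [hΦ, hw₀, hc₀]
    exact (EReal.coe_add _ _).symm
  set S : Set (Fin m → ℝ) := Φ ⁻¹' Set.Iic (c₀ : EReal) with hS
  have hSclosed : IsClosed S := hΦlsc.isClosed_preimage _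
  have hSne : w₀ ∈ S := by simp [hS, Set.mem_preimage, hΦw₀]
  -- S is bounded
  set K : ℝ := 2 * |c₀ - C| / μ with hK
  set N : ℝ := 2 * (M + μ * ‖u‖) / μ with hN
  have hK0 : 0 ≤ K := div_nonneg (by positivity) hμ.le
  have hN0 : 0 ≤ N := div_nonneg (by positivity) hμ.le
  set R : ℝ := max 1 (K + N) with hR
  have hbound : ∀ w ∈ S, ‖w‖ ≤ R := by
    intro w hw
    have hgtop : g w ≠ ⊤ := by
      intro h
      have : Φ w = ⊤ := by simp [hΦ, h, EReal.coe_add_top]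
      rw [Set.mem_preimage, Set.mem_Iic, this, top_le_iff] at hw
      exact EReal.coe_ne_top _ hw
    have hgbot : g w ≠ ⊥ := by
      intro h
      exact absurd (le_bot_iff.mp (h ▸ hlb w)) (EReal.coe_ne_bot _)
    set gw : ℝ := (g w).toReal with hgw
    have hgweq : g w = (gw : EReal) := (EReal.coe_toReal hgtop hgbot).symm
    have h1 : q w + gw ≤ c₀ := by
      have := hw
      rw [Set.mem_preimage, Set.mem_Iic, hΦ] at this
      simp only at this
      rw [hgweq, ← EReal.coe_add, EReal.coe_le_coe_iff] at this
      exact this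
    have h2 : C - M * ‖w‖ ≤ gw := by
      have := hlb w
      rw [hgweq, EReal.coe_le_coe_iff] at this
      exact this
    have h3 : μ * ‖w - u‖^2 ≤ (w - u) ⬝ᵥ B.mulVec (w - u) := hquad _
    have h4 : (‖w‖ - ‖u‖)^2 ≤ ‖w - u‖^2 := by
      have := abs_norm_sub_norm_le w u
      have h5 : |‖w‖ - ‖u‖|^2 ≤ ‖w - u‖^2 := by
        apply sq_le_sq' <;> nlinarith [abs_nonneg (‖w‖ - ‖u‖), le_abs_self (‖w‖ - ‖u‖),
          neg_abs_le (‖w‖ - ‖u‖)]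
      calc (‖w‖ - ‖u‖)^2 = |‖w‖ - ‖u‖|^2 := (sq_abs _).symm
        _ ≤ ‖w - u‖^2 := h5
    -- μ/2 (x - a)^2 ≤ c₀ - C + M x, where x = ‖w‖, a = ‖u‖
    set x : ℝ := ‖w‖ with hx
    set a : ℝ := ‖u‖ with ha
    have hx0 : 0 ≤ x := norm_nonneg _
    have ha0 : 0 ≤ a := norm_nonneg _
    have hqw : q w = 1 / 2 * ((w - u) ⬝ᵥ B.mulVec (w - u)) := rfl
    have hkey : μ / 2 * (x - a)^2 ≤ c₀ - C + M * x := by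
      nlinarith [mul_le_mul_of_nonneg_left h4 (by positivity : (0:ℝ) ≤ μ / 2)]
    have hsq : x^2 ≤ K + N * x := by
      rw [hK, hN, div_mul_eq_mul_div, ← add_div, le_div_iff₀ hμ]
      nlinarith [le_abs_self (c₀ - C), hkey, mul_nonneg hμ.le (sq_nonneg a)]
    by_cases hx1 : x ≤ 1
    · exact le_trans hx1 (le_max_left _ _)
    · push_neg at hx1
      have hxKN : x ≤ K + N := by
        by_contra hcon
        push_neg at hcon
        nlinarith [hsq, hK0, hN0, hx1, mul_pos (lt_trans zero_lt_one hx1) (sub_pos.mpr hcon)]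
      exact le_trans hxKN (le_max_right _ _)
  have hScomp : IsCompact S := by
    refine (isCompact_closedBall (0 : Fin m → ℝ) R).of_isClosed_subset hSclosed ?_
    intro w hw
    rw [mem_closedBall_zero_iff]
    exact hbound w hw
  obtain ⟨p, hpS, hpmin⟩ := lsc_min_on_compact hScomp ⟨w₀, hSne⟩ hΦlsc
  refine ⟨p, fun w => ?_⟩
  by_cases hwS : w ∈ S
  · exact hpmin w hwS
  · have h1 : Φ p ≤ Φ w₀ := hpmin w₀ hSne
    have h2 : Φ w₀ ≤ Φ w := by
      rw [hΦw₀]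
      rw [hS, Set.mem_preimage, Set.mem_Iic, not_le] at hwS
      exact hwS.le
    exact le_trans h1 h2

lemma min_unique {B : Matrix (Fin m) (Fin m) ℝ} (hB : B.PosDef)
    (u : Fin m → ℝ) {g : (Fin m → ℝ) → EReal} (hnbot : ∀ w, g w ≠ ⊥)
    (hconv : ∀ w₁ w₂ : Fin m → ℝ, ∀ t : ℝ, 0 ≤ t → t ≤ 1 →
      g (t • w₁ + (1 - t) • w₂) ≤ (t : EReal) * g w₁ + ((1 - t : ℝ) : EReal) * g w₂)
    (w₁ : Fin m → ℝ) (r₁ : ℝ) (hw₁ : g w₁ = (r₁ : EReal))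
    (p p' : Fin m → ℝ)
    (hp : ∀ w : Fin m → ℝ,
      ((1 / 2 * ((p - u) ⬝ᵥ B.mulVec (p - u)) : ℝ) : EReal) + g p
        ≤ ((1 / 2 * ((w - u) ⬝ᵥ B.mulVec (w - u)) : ℝ) : EReal) + g w)
    (hp' : ∀ w : Fin m → ℝ,
      ((1 / 2 * ((p' - u) ⬝ᵥ B.mulVec (p' - u)) : ℝ) : EReal) + g p'
        ≤ ((1 / 2 * ((w - u) ⬝ᵥ B.mulVec (w - u)) : ℝ) : EReal) + g w) :
    p' = p := by
  set q : (Fin m → ℝ) → ℝ := fun w => 1 / 2 * ((w - u) ⬝ᵥ B.mulVec (w - u)) with hq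
  have htop : ∀ (z : Fin m → ℝ),
      (∀ w : Fin m → ℝ, ((q z : ℝ) : EReal) + g z ≤ ((q w : ℝ) : EReal) + g w) → g z ≠ ⊤ := by
    intro z hz h
    have := hz w₁
    rw [h, hw₁, EReal.coe_add_top, top_le_iff, ← EReal.coe_add] at this
    exact EReal.coe_ne_top _ this
  have hptop : g p ≠ ⊤ := htop p hp
  have hp'top : g p' ≠ ⊤ := htop p' hp'
  set a : ℝ := (g p).toReal with ha
  set b : ℝ := (g p').toReal with hb
  have hpa : g p = (a : EReal) := (EReal.coe_toReal hptop (hnbot p)).symm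
  have hpb : g p' = (b : EReal) := (EReal.coe_toReal hp'top (hnbot p')).symm
  have hEq : q p + a = q p' + b := by
    have h1 := hp p'
    have h2 := hp' p
    rw [hpa, hpb, ← EReal.coe_add, ← EReal.coe_add, EReal.coe_le_coe_iff] at h1 h2
    simp only [hq]
    linarith
  by_contra hne
  -- midpoint
  set mid : Fin m → ℝ := (1/2 : ℝ) • p' + (1/2 : ℝ) • p with hmid
  have hconvmid : g mid ≤ ((1/2 * b + 1/2 * a : ℝ) : EReal) := by
    have := hconv p' p (1/2) (by norm_num) (by norm_num)
    rw [show (1 - (1/2 : ℝ)) = (1/2 : ℝ) by norm_num] at this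
    rw [hpa, hpb, ← EReal.coe_mul, ← EReal.coe_mul, ← EReal.coe_add] at this
    exact this
  -- strict convexity of the quadratic part
  have hmidu : mid - u = (1/2 : ℝ) • (p' - u) + (1/2 : ℝ) • (p - u) := by
    funext i
    simp [hmid, smul_eq_mul]
    ring
  set x : Fin m → ℝ := p' - u with hx
  set y : Fin m → ℝ := p - u with hy
  have hxy : x - y = p' - p := by funext i; simp [hx, hy]
  have hQxy : 0 < (x - y) ⬝ᵥ B.mulVec (x - y) := by
    rw [hxy]
    exact quad_pos hB (sub_ne_zero.mpr hne)
  have hcross : (x - y) ⬝ᵥ B.mulVec (x - y)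
      = x ⬝ᵥ B.mulVec x - 2 * (x ⬝ᵥ B.mulVec y) + y ⬝ᵥ B.mulVec y := by
    have h := quad_expand hB.1 x (-y)
    have h2 : x + -y = x - y := (sub_eq_add_neg x y).symm
    have h3 : B.mulVec (-y) = -B.mulVec y := by
      rw [Matrix.mulVec_neg]
    rw [h2, h3] at h
    simp only [dotProduct_neg, neg_dotProduct, neg_neg] at h
    rw [h]; ring
  have hqmid : q mid = 1/2 * (1/4 * (x ⬝ᵥ B.mulVec x) + 1/2 * (x ⬝ᵥ B.mulVec y)
      + 1/4 * (y ⬝ᵥ B.mulVec y)) := by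
    rw [hq]
    simp only
    rw [hmidu]
    rw [quad_expand hB.1 ((1/2 : ℝ) • x) ((1/2 : ℝ) • y)]
    rw [quad_smul, quad_smul]
    rw [Matrix.mulVec_smul, smul_dotProduct, dotProduct_smul]
    simp [smul_eq_mul]
    ring
  have hstrict : q mid < 1/2 * q p' + 1/2 * q p := by
    rw [hqmid, hq]
    simp only
    have hx2 : (p' - u) ⬝ᵥ B.mulVec (p' - u) = x ⬝ᵥ B.mulVec x := rfl
    have hy2 : (p - u) ⬝ᵥ B.mulVec (p - u) = y ⬝ᵥ B.mulVec y := rfl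
    rw [hx2, hy2]
    nlinarith [hQxy, hcross]
  -- contradiction
  have hΦmid : ((q mid : ℝ) : EReal) + g mid ≤ ((q mid + (1/2 * b + 1/2 * a) : ℝ) : EReal) := by
    rw [EReal.coe_add]
    exact add_le_add_right hconvmid _
  have hmin := hp mid
  rw [hpa, ← EReal.coe_add] at hmin
  have hle := le_trans hmin hΦmid
  rw [EReal.coe_le_coe_iff] at hle
  have hqp : q p = 1 / 2 * ((p - u) ⬝ᵥ B.mulVec (p - u)) := rfl
  have hqp' : q p' = 1 / 2 * ((p' - u) ⬝ᵥ B.mulVec (p' - u)) := rfl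
  have hx2 : (p' - u) ⬝ᵥ B.mulVec (p' - u) = x ⬝ᵥ B.mulVec x := rfl
  have hy2 : (p - u) ⬝ᵥ B.mulVec (p - u) = y ⬝ᵥ B.mulVec y := rfl
  rw [hx2] at hqp'
  rw [hy2] at hqp
  linarith

lemma fstar_ne_bot {f : (Fin m → ℝ) → EReal} (w₀ : Fin m → ℝ) (r₀ : ℝ)
    (hw₀ : f w₀ = (r₀ : EReal)) (z : Fin m → ℝ) : fenchelConj f z ≠ ⊥ := by
  have h : ((z ⬝ᵥ w₀ - r₀ : ℝ) : EReal) ≤ fenchelConj f z := by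
    have := le_iSup (fun w => ((z ⬝ᵥ w : ℝ) : EReal) - f w) w₀
    rwa [hw₀, ← EReal.coe_sub] at this
  intro hbot
  rw [hbot, le_bot_iff] at h
  exact EReal.coe_ne_bot _ h

lemma fstar_conv {f : (Fin m → ℝ) → EReal} (hnbot : ∀ w, f w ≠ ⊥) :
    ∀ z₁ z₂ : Fin m → ℝ, ∀ t : ℝ, 0 ≤ t → t ≤ 1 →
      fenchelConj f (t • z₁ + (1 - t) • z₂)
        ≤ (t : EReal) * fenchelConj f z₁ + ((1 - t : ℝ) : EReal) * fenchelConj f z₂ := by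
  intro z₁ z₂ t ht0 ht1
  rcases eq_or_lt_of_le ht0 with h0 | h0
  · simp [← h0]
  rcases eq_or_lt_of_le ht1 with h1 | h1
  · simp [h1]
  apply iSup_le
  intro w
  have hdot : (t • z₁ + (1 - t) • z₂) ⬝ᵥ w = t * (z₁ ⬝ᵥ w) + (1 - t) * (z₂ ⬝ᵥ w) := by
    rw [add_dotProduct, smul_dotProduct, smul_dotProduct]
    simp [smul_eq_mul]
  rw [hdot]
  have hle1 : ((z₁ ⬝ᵥ w : ℝ) : EReal) - f w ≤ fenchelConj f z₁ :=
    le_iSup (fun w => ((z₁ ⬝ᵥ w : ℝ) : EReal) - f w) w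
  have hle2 : ((z₂ ⬝ᵥ w : ℝ) : EReal) - f w ≤ fenchelConj f z₂ :=
    le_iSup (fun w => ((z₂ ⬝ᵥ w : ℝ) : EReal) - f w) w
  have hmul1 : (t : EReal) * (((z₁ ⬝ᵥ w : ℝ) : EReal) - f w) ≤ (t : EReal) * fenchelConj f z₁ :=
    mul_le_mul_of_nonneg_left hle1 (EReal.coe_nonneg.mpr ht0)
  have hmul2 : ((1 - t : ℝ) : EReal) * (((z₂ ⬝ᵥ w : ℝ) : EReal) - f w)
      ≤ ((1 - t : ℝ) : EReal) * fenchelConj f z₂ :=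
    mul_le_mul_of_nonneg_left hle2 (EReal.coe_nonneg.mpr (by linarith))
  refine le_trans ?_ (add_le_add hmul1 hmul2)
  rcases eq_or_ne (f w) ⊤ with htw | htw
  · rw [htw, EReal.sub_top]
    exact bot_le
  · have hfw : f w = (((f w).toReal : ℝ) : EReal) := (EReal.coe_toReal htw (hnbot w)).symm
    set e : ℝ := (f w).toReal
    rw [hfw, ← EReal.coe_sub, ← EReal.coe_sub, ← EReal.coe_sub, ← EReal.coe_mul,
      ← EReal.coe_mul, ← EReal.coe_add, EReal.coe_le_coe_iff]
    nlinarith [sq_nonneg t]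

/-- Generalized Moreau identity: for a symmetric positive definite matrix `A`
and a proper convex lower semicontinuous `f : ℝ^m → ℝ ∪ {+∞}`, the problems
`min_w ½(w−v)ᵀA(w−v) + f(w)` and `min_w ½(w−Av)ᵀA⁻¹(w−Av) + f*(w)` have unique
minimizers `p` and `q`, which satisfy `v = p + A⁻¹ q`. -/
theorem stmt_10 (m : ℕ) (hm : 1 ≤ m) (A : Matrix (Fin m) (Fin m) ℝ) (hA : A.PosDef)
    (f : (Fin m → ℝ) → EReal)
    (hproper : ∃ w, f w ≠ ⊤) (hnbot : ∀ w, f w ≠ ⊥)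
    (hconv : ∀ w₁ w₂ : Fin m → ℝ, ∀ t : ℝ, 0 ≤ t → t ≤ 1 →
      f (t • w₁ + (1 - t) • w₂) ≤ (t : EReal) * f w₁ + ((1 - t : ℝ) : EReal) * f w₂)
    (hlsc : LowerSemicontinuous f) (v : Fin m → ℝ) :
    ∃ p q : Fin m → ℝ,
      (∀ w : Fin m → ℝ,
        (((1 / 2 * ((p - v) ⬝ᵥ A.mulVec (p - v)) : ℝ)) : EReal) + f p
          ≤ (((1 / 2 * ((w - v) ⬝ᵥ A.mulVec (w - v)) : ℝ)) : EReal) + f w) ∧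
      (∀ p' : Fin m → ℝ,
        (∀ w : Fin m → ℝ,
          (((1 / 2 * ((p' - v) ⬝ᵥ A.mulVec (p' - v)) : ℝ)) : EReal) + f p'
            ≤ (((1 / 2 * ((w - v) ⬝ᵥ A.mulVec (w - v)) : ℝ)) : EReal) + f w) → p' = p) ∧
      (∀ w : Fin m → ℝ,
        (((1 / 2 * ((q - A.mulVec v) ⬝ᵥ A⁻¹.mulVec (q - A.mulVec v)) : ℝ)) : EReal)
            + fenchelConj f q
          ≤ (((1 / 2 * ((w - A.mulVec v) ⬝ᵥ A⁻¹.mulVec (w - A.mulVec v)) : ℝ)) : EReal)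
            + fenchelConj f w) ∧
      (∀ q' : Fin m → ℝ,
        (∀ w : Fin m → ℝ,
          (((1 / 2 * ((q' - A.mulVec v) ⬝ᵥ A⁻¹.mulVec (q' - A.mulVec v)) : ℝ)) : EReal)
              + fenchelConj f q'
            ≤ (((1 / 2 * ((w - A.mulVec v) ⬝ᵥ A⁻¹.mulVec (w - A.mulVec v)) : ℝ)) : EReal)
              + fenchelConj f w) → q' = q) ∧
      v = p + A⁻¹.mulVec q := by
  classical
  obtain ⟨w₀, hw₀top⟩ := hproper
  set r₀ : ℝ := (f w₀).toReal with hr₀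
  have hw₀ : f w₀ = (r₀ : EReal) := (EReal.coe_toReal hw₀top (hnbot w₀)).symm
  obtain ⟨C, M, hM, hlb⟩ := exists_linear_lb hnbot hconv hlsc w₀ r₀ hw₀
  obtain ⟨p, hp⟩ := exists_min hm hA v hlsc w₀ r₀ hw₀ C M hM hlb
  -- finiteness of f p
  have hfptop : f p ≠ ⊤ := by
    intro h
    have := hp w₀
    rw [h, hw₀, EReal.coe_add_top, top_le_iff, ← EReal.coe_add] at this
    exact EReal.coe_ne_top _ this
  set fp : ℝ := (f p).toReal with hfpdef
  have hfp : f p = (fp : EReal) := (EReal.coe_toReal hfptop (hnbot p)).symm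
  -- the dual candidate
  set q₀ : Fin m → ℝ := A.mulVec (v - p) with hq₀
  have hAdet : IsUnit A.det := (Matrix.isUnit_iff_isUnit_det A).mp hA.isUnit
  have hinv : ∀ x : Fin m → ℝ, A⁻¹.mulVec (A.mulVec x) = x := by
    intro x
    rw [Matrix.mulVec_mulVec, Matrix.nonsing_inv_mul A hAdet, Matrix.one_mulVec]
  -- subgradient inequality
  have hsub : ∀ w : Fin m → ℝ, ((fp + q₀ ⬝ᵥ (w - p) : ℝ) : EReal) ≤ f w := by
    intro w
    rcases eq_or_ne (f w) ⊤ with htw | htw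
    · rw [htw]; exact le_top
    have hfw : f w = (((f w).toReal : ℝ) : EReal) := (EReal.coe_toReal htw (hnbot w)).symm
    set c : ℝ := (f w).toReal
    rw [hfw, EReal.coe_le_coe_iff]
    set d : ℝ := (p - v) ⬝ᵥ A.mulVec (w - p) with hd
    set Q : ℝ := (w - p) ⬝ᵥ A.mulVec (w - p) with hQ
    have hQ0 : 0 ≤ Q := quad_nonneg hA _
    have key : ∀ t : ℝ, 0 < t → t ≤ 1 → fp ≤ c + d + t / 2 * Q := by
      intro t ht0 ht1
      have hw' := hp (p + t • (w - p))
      have hcv := hconv w p t ht0.le ht1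
      rw [← combo_eq w p t] at hcv
      rw [hfw, hfp, ← EReal.coe_mul, ← EReal.coe_mul, ← EReal.coe_add] at hcv
      have hexp : ((p + t • (w - p)) - v) ⬝ᵥ A.mulVec ((p + t • (w - p)) - v)
          = (p - v) ⬝ᵥ A.mulVec (p - v) + 2 * (t * d) + t ^ 2 * Q := by
        have e1 : (p + t • (w - p)) - v = (p - v) + t • (w - p) := by
          funext i; simp [smul_eq_mul]; ring
        rw [e1, quad_expand hA.1, quad_smul, Matrix.mulVec_smul, dotProduct_smul]
        rw [hd, hQ]
        simp only [smul_eq_mul]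
      have hw2 := le_trans hw' (add_le_add_right hcv _)
      rw [hfp, ← EReal.coe_add, ← EReal.coe_add, EReal.coe_le_coe_iff, hexp] at hw2
      -- (1/2)Qp + fp ≤ (1/2)(Qp + 2td + t²Q) + (t c + (1-t) fp)
      have ht2 : t * fp ≤ t * (c + d + t / 2 * Q) := by nlinarith
      exact le_of_mul_le_mul_left ht2 ht0
    have hfinal : fp - c - d ≤ 0 := by
      by_contra hcon
      push_neg at hcon
      set ε : ℝ := fp - c - d with hε
      set t : ℝ := min 1 (ε / (Q + 1)) with htdef
      have hQ1 : (0:ℝ) < Q + 1 := by linarith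
      have ht0 : 0 < t := lt_min one_pos (div_pos hcon hQ1)
      have ht1 : t ≤ 1 := min_le_left _ _
      have hk := key t ht0 ht1
      have htQ : t * Q ≤ ε * Q / (Q + 1) := by
        have h5 : t ≤ ε / (Q + 1) := min_le_right _ _
        calc t * Q ≤ (ε / (Q + 1)) * Q := mul_le_mul_of_nonneg_right h5 hQ0
          _ = ε * Q / (Q + 1) := by ring
      have hlt : ε * Q / (Q + 1) < ε := by
        rw [div_lt_iff₀ hQ1]
        nlinarith
      have : ε ≤ t / 2 * Q := by linarith
      nlinarith
    have hdq : q₀ ⬝ᵥ (w - p) = -d := by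
      rw [hq₀, hd]
      rw [dotProduct_comm, symm_dot hA.1, ← neg_sub p v, neg_dotProduct]
    rw [hdq]
    linarith
  -- Fenchel conjugate value at q₀
  have hstar : fenchelConj f q₀ = ((q₀ ⬝ᵥ p - fp : ℝ) : EReal) := by
    apply le_antisymm
    · apply iSup_le
      intro w
      rcases eq_or_ne (f w) ⊤ with htw | htw
      · rw [htw, EReal.sub_top]; exact bot_le
      · have hfw : f w = (((f w).toReal : ℝ) : EReal) := (EReal.coe_toReal htw (hnbot w)).symm
        rw [hfw, ← EReal.coe_sub, EReal.coe_le_coe_iff]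
        have h6 := hsub w
        rw [hfw, EReal.coe_le_coe_iff] at h6
        have h7 : q₀ ⬝ᵥ (w - p) = q₀ ⬝ᵥ w - q₀ ⬝ᵥ p := dotProduct_sub _ _ _
        linarith
    · have := le_iSup (fun w => ((q₀ ⬝ᵥ w : ℝ) : EReal) - f w) p
      rwa [hfp, ← EReal.coe_sub] at this
  -- q₀ minimizes the dual problem
  have hqmin : ∀ z : Fin m → ℝ,
      (((1 / 2 * ((q₀ - A.mulVec v) ⬝ᵥ A⁻¹.mulVec (q₀ - A.mulVec v)) : ℝ)) : EReal)
          + fenchelConj f q₀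
        ≤ (((1 / 2 * ((z - A.mulVec v) ⬝ᵥ A⁻¹.mulVec (z - A.mulVec v)) : ℝ)) : EReal)
          + fenchelConj f z := by
    intro z
    have hfz : ((z ⬝ᵥ p - fp : ℝ) : EReal) ≤ fenchelConj f z := by
      have := le_iSup (fun w => ((z ⬝ᵥ w : ℝ) : EReal) - f w) p
      rwa [hfp, ← EReal.coe_sub] at this
    have hAp : A⁻¹.mulVec (q₀ - A.mulVec v) = -p := by
      have e1 : q₀ - A.mulVec v = A.mulVec (-p) := by
        rw [hq₀, ← Matrix.mulVec_sub]
        congr 1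
        funext i; simp
      rw [e1, hinv]
    -- real inequality
    have hreal : 1 / 2 * ((q₀ - A.mulVec v) ⬝ᵥ A⁻¹.mulVec (q₀ - A.mulVec v)) + q₀ ⬝ᵥ p
        ≤ 1 / 2 * ((z - A.mulVec v) ⬝ᵥ A⁻¹.mulVec (z - A.mulVec v)) + z ⬝ᵥ p := by
      have e2 : z - A.mulVec v = (z - q₀) + (q₀ - A.mulVec v) := by
        funext i; simp
      rw [e2, quad_expand hA.inv.1, hAp]
      have h8 : (z - q₀) ⬝ᵥ (-p) = -((z - q₀) ⬝ᵥ p) := dotProduct_neg _ _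
      have h9 : (z - q₀) ⬝ᵥ p = z ⬝ᵥ p - q₀ ⬝ᵥ p := sub_dotProduct _ _ _
      have h10 : 0 ≤ (z - q₀) ⬝ᵥ A⁻¹.mulVec (z - q₀) := quad_nonneg hA.inv _
      rw [h8, h9]
      nlinarith
    calc (((1 / 2 * ((q₀ - A.mulVec v) ⬝ᵥ A⁻¹.mulVec (q₀ - A.mulVec v)) : ℝ)) : EReal)
          + fenchelConj f q₀
        = ((1 / 2 * ((q₀ - A.mulVec v) ⬝ᵥ A⁻¹.mulVec (q₀ - A.mulVec v))
            + (q₀ ⬝ᵥ p - fp) : ℝ) : EReal) := by rw [hstar, ← EReal.coe_add]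
      _ ≤ ((1 / 2 * ((z - A.mulVec v) ⬝ᵥ A⁻¹.mulVec (z - A.mulVec v))
            + (z ⬝ᵥ p - fp) : ℝ) : EReal) := by
          rw [EReal.coe_le_coe_iff]; linarith
      _ = (((1 / 2 * ((z - A.mulVec v) ⬝ᵥ A⁻¹.mulVec (z - A.mulVec v)) : ℝ)) : EReal)
            + ((z ⬝ᵥ p - fp : ℝ) : EReal) := EReal.coe_add _ _
      _ ≤ _ := add_le_add_right hfz _
  refine ⟨p, q₀, hp, ?_, hqmin, ?_, ?_⟩
  · intro p' hp'
    exact min_unique hA v hnbot hconv w₀ r₀ hw₀ p p' hp hp'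
  · intro q' hq'
    exact min_unique hA.inv (A.mulVec v) (fstar_ne_bot w₀ r₀ hw₀) (fstar_conv hnbot)
      q₀ (q₀ ⬝ᵥ p - fp) hstar q₀ q' hqmin hq'
  · rw [hq₀, hinv]
    funext i; simp
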